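/- Let H be a real Hilbert space, v₁,…,v_{n_s}, g₁,…,g_{n_g} ∈ H, 𝒢 = span{g₁,…,g_{n_g}}, and W a closed linear subspace of H with orthogonal projection Π_W. Let L_W = {S ∈ L(H) : S(𝒢) ⊆ W}. For any A = [a_{kl}] ∈ ℝ^{n_s×n_g}, set K̂ = Σ_{k,l} a_{kl} v_k ⊗ g_l and K̃_W = Σ_{k,l} a_{kl} (Π_W v_k) ⊗ g_l. Then K̃_W ∈ L_W and ‖K̂ − K̃_W‖ ≤ ‖K̂ − S‖ for every S ∈ L_W; that is, K̃_W is a minimizer of S ↦ ‖K̂ − S‖ over L_W. -/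

import Mathlib

open scoped InnerProductSpace

/-- The rank-one operator `v ⊗ u : w ↦ ⟪u, w⟫ v` on a real Hilbert space. -/
noncomputable def rankOne {H : Type*} [NormedAddCommGroup H] [InnerProductSpace ℝ H]
    (v u : H) : H →L[ℝ] H := (innerSL ℝ u).smulRight v

/-- `K̃_W = Σ_{k,l} a_{kl} (Π_W v_k) ⊗ g_l` belongs to
`L_W = {S ∈ L(H) : S(span{g_l}) ⊆ W}` and minimizes `S ↦ ‖K̂ − S‖` over `L_W`,
where `K̂ = Σ_{k,l} a_{kl} v_k ⊗ g_l`. -/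
theorem statement2 {H : Type*} [NormedAddCommGroup H] [InnerProductSpace ℝ H]
    [CompleteSpace H] {ns ng : ℕ} (v : Fin ns → H) (g : Fin ng → H)
    (W : Submodule ℝ H) [W.HasOrthogonalProjection]
    (A : Matrix (Fin ns) (Fin ng) ℝ) :
    (∑ k, ∑ l, A k l • rankOne ((W.orthogonalProjectionOnto (v k) : H)) (g l)) ∈
      {S : H →L[ℝ] H | ∀ x ∈ Submodule.span ℝ (Set.range g), S x ∈ W} ∧
    ∀ S ∈ {S : H →L[ℝ] H | ∀ x ∈ Submodule.span ℝ (Set.range g), S x ∈ W},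
      ‖(∑ k, ∑ l, A k l • rankOne (v k) (g l)) -
          ∑ k, ∑ l, A k l • rankOne ((W.orthogonalProjectionOnto (v k) : H)) (g l)‖ ≤
      ‖(∑ k, ∑ l, A k l • rankOne (v k) (g l)) - S‖ := by
  set G : Submodule ℝ H := Submodule.span ℝ (Set.range g) with hG
  haveI : FiniteDimensional ℝ G := FiniteDimensional.span_of_finite ℝ (Set.finite_range g)
  haveI : G.HasOrthogonalProjection := inferInstance
  set Khat : H →L[ℝ] H := ∑ k, ∑ l, A k l • rankOne (v k) (g l) with hKhat
  set Ktil : H →L[ℝ] H :=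
    ∑ k, ∑ l, A k l • rankOne ((W.orthogonalProjectionOnto (v k) : H)) (g l) with hKtil
  have happ : ∀ (w : Fin ns → H) (x : H),
      (∑ k, ∑ l, A k l • rankOne (w k) (g l)) x = ∑ k, ∑ l, (A k l * ⟪g l, x⟫_ℝ) • w k := by
    intro w x
    simp [ContinuousLinearMap.sum_apply, rankOne, mul_smul]
  -- K̃ x = Π_W (K̂ x)
  have hKtil_eq : ∀ x : H, Ktil x = (W.orthogonalProjectionOnto (Khat x) : H) := by
    intro x
    rw [hKtil, hKhat, happ, happ]
    simp only [map_sum, map_smul, AddSubmonoidClass.coe_finset_sum, SetLike.val_smul]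
  have hmem : ∀ x : H, Ktil x ∈ W := fun x => by rw [hKtil_eq]; exact Submodule.coe_mem _
  refine ⟨fun x _ => hmem x, ?_⟩
  intro S hS
  -- K̂ x depends only on projection of x onto G
  have hdep : ∀ x : H, Khat x = Khat (G.orthogonalProjectionOnto x : H) := by
    intro x
    rw [hKhat, happ, happ]
    congr 1; ext k; congr 1; ext l
    congr 2
    have horth : x - (G.orthogonalProjectionOnto x : H) ∈ Gᗮ :=
      Submodule.sub_starProjection_mem_orthogonal x
    have hg : g l ∈ G := Submodule.subset_span ⟨l, rfl⟩
    have := (Submodule.mem_orthogonal G _).mp horth (g l) hg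
    have h2 : ⟪g l, x - (G.orthogonalProjectionOnto x : H)⟫_ℝ = 0 := by
      exact this
    rw [inner_sub_right] at h2
    linarith
  refine ContinuousLinearMap.opNorm_le_bound _ (norm_nonneg _) (fun x => ?_)
  set y : H := (G.orthogonalProjectionOnto x : H) with hy
  have hyx : ‖y‖ ≤ ‖x‖ := by
    rw [hy]
    simpa using G.orthogonalProjectionOnto.le_opNorm x |>.trans
      (by nlinarith [Submodule.orthogonalProjectionOnto_norm_le G, norm_nonneg x])
  have hSy : S y ∈ W := hS y (Submodule.coe_mem _)
  have hmin : ‖Khat y - (W.orthogonalProjectionOnto (Khat y) : H)‖ ≤ ‖Khat y - S y‖ := by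
    rw [← Submodule.starProjection_apply, Submodule.starProjection_minimal]
    exact ciInf_le ⟨0, fun z => by rintro ⟨w, rfl⟩; positivity⟩ (⟨S y, hSy⟩ : W)
  calc ‖(Khat - Ktil) x‖ = ‖Khat y - (W.orthogonalProjectionOnto (Khat y) : H)‖ := by
        rw [ContinuousLinearMap.sub_apply, hKtil_eq, hdep x]
      _ ≤ ‖Khat y - S y‖ := hmin
      _ = ‖(Khat - S) y‖ := by rw [ContinuousLinearMap.sub_apply]
      _ ≤ ‖Khat - S‖ * ‖y‖ := (Khat - S).le_opNorm y
      _ ≤ ‖Khat - S‖ * ‖x‖ := by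
        exact mul_le_mul_of_nonneg_left hyx (norm_nonneg _)
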